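/- Let M ⊆ ℤ^m be an affine monoid and F a face of cone(M). Then the quotient K[M]/p_F is isomorphic as a K-algebra to K[M ∩ F], where p_F is the ideal spanned by monomials X^a with a ∈ M \ F. Moreover the natural inclusion K[M ∩ F] → K[M] is split by the face projection sending X^a to X^a if a ∈ F and to 0 otherwise. -/

import Mathlib

noncomputable section

/-- The canonical embedding `ℤ^m → ℝ^m`. -/
def toR {m : ℕ} (x : Fin m → ℤ) : Fin m → ℝ := fun i => (x i : ℝ)

/-- The subgroup of `ℤ^m` generated by a submonoid `M`. -/
def gp {m : ℕ} (M : AddSubmonoid (Fin m → ℤ)) : AddSubgroup (Fin m → ℤ) :=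
  AddSubgroup.closure (M : Set (Fin m → ℤ))

/-- The convex cone in `ℝ^m` generated by `M`: all nonnegative real combinations
of elements of `M`. -/
def coneM {m : ℕ} (M : AddSubmonoid (Fin m → ℤ)) : Set (Fin m → ℝ) :=
  {x | ∃ (n : ℕ) (c : Fin n → ℝ) (v : Fin n → (Fin m → ℤ)),
    (∀ i, 0 ≤ c i) ∧ (∀ i, v i ∈ M) ∧ x = ∑ i, c i • toR (v i)}

/-- Faces of `coneM M`: the cone itself, or an intersection with a supporting
hyperplane given by a linear form nonnegative on the cone. -/
def IsFace {m : ℕ} (M : AddSubmonoid (Fin m → ℤ)) (F : Set (Fin m → ℝ)) : Prop :=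
  F = coneM M ∨ ∃ α : (Fin m → ℝ) →ₗ[ℝ] ℝ,
    (∀ x ∈ coneM M, 0 ≤ α x) ∧ F = {x ∈ coneM M | α x = 0}

/-- A facet: a maximal proper face. -/
def IsFacet {m : ℕ} (M : AddSubmonoid (Fin m → ℤ)) (F : Set (Fin m → ℝ)) : Prop :=
  IsFace M F ∧ F ≠ coneM M ∧ ∀ G, IsFace M G → F ⊆ G → G = F ∨ G = coneM M

/-- The subgroup `gp(M ∩ F)` of `ℤ^m` generated by the elements of `M` lying
in the face `F`. -/
def gpF {m : ℕ} (M : AddSubmonoid (Fin m → ℤ)) (F : Set (Fin m → ℝ)) :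
    AddSubgroup (Fin m → ℤ) :=
  AddSubgroup.closure {a : Fin m → ℤ | a ∈ M ∧ toR a ∈ F}

/-- `M` is seminormal: `z ∈ gp(M)`, `2z ∈ M`, `3z ∈ M` imply `z ∈ M`. -/
def Seminormal {m : ℕ} (M : AddSubmonoid (Fin m → ℤ)) : Prop :=
  ∀ z ∈ gp M, 2 • z ∈ M → 3 • z ∈ M → z ∈ M

/-- `M` is normal: `z ∈ gp(M)`, `kz ∈ M` for some `k ≥ 1` imply `z ∈ M`. -/
def IsNormal {m : ℕ} (M : AddSubmonoid (Fin m → ℤ)) : Prop :=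
  ∀ z ∈ gp M, (∃ k : ℕ, 0 < k ∧ k • z ∈ M) → z ∈ M

/-- `M` is positive: `0` is the only invertible element. -/
def Positive {m : ℕ} (M : AddSubmonoid (Fin m → ℤ)) : Prop :=
  ∀ a ∈ M, -a ∈ M → a = 0

/-- The localization monoid `M_F` of `M` at a face `F`:
elements `a ∈ gp(M)` with `a + b ∈ M` for some `b ∈ M ∩ F`. -/
def locM {m : ℕ} (M : AddSubmonoid (Fin m → ℤ)) (F : Set (Fin m → ℝ)) :
    Set (Fin m → ℤ) :=
  {a | a ∈ gp M ∧ ∃ b, b ∈ M ∧ toR b ∈ F ∧ a + b ∈ M}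

/-- For a subset `F ⊆ ℝ^m`, the ideal `p_F` of `K[M]` generated by the
monomials `X^a` with `a ∈ M`, `a ∉ F`. -/
def pIdeal {m : ℕ} (K : Type*) [Field K] (M : AddSubmonoid (Fin m → ℤ))
    (F : Set (Fin m → ℝ)) : Ideal (AddMonoidAlgebra K ↥M) :=
  Ideal.span {x | ∃ a : ↥M, toR (a : Fin m → ℤ) ∉ F ∧
    x = AddMonoidAlgebra.single a (1 : K)}

lemma toR_add {m : ℕ} (a b : Fin m → ℤ) : toR (a + b) = toR a + toR b := by
  funext i; simp [toR]

lemma toR_zero' {m : ℕ} : toR (0 : Fin m → ℤ) = 0 := by funext i; simp [toR]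

lemma mem_coneM {m : ℕ} {M : AddSubmonoid (Fin m → ℤ)} {a : Fin m → ℤ} (ha : a ∈ M) :
    toR a ∈ coneM M :=
  ⟨1, fun _ => 1, fun _ => a, fun _ => zero_le_one, fun _ => ha, by simp⟩

lemma zero_mem_coneM {m : ℕ} (M : AddSubmonoid (Fin m → ℤ)) :
    (0 : Fin m → ℝ) ∈ coneM M := ⟨0, ![], ![], by simp, by simp, by simp⟩

lemma face_zero_mem {m : ℕ} {M : AddSubmonoid (Fin m → ℤ)} {F : Set (Fin m → ℝ)}
    (hF : IsFace M F) : (0 : Fin m → ℝ) ∈ F := by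
  rcases hF with rfl | ⟨α, hα, rfl⟩
  · exact zero_mem_coneM M
  · exact ⟨zero_mem_coneM M, by simp⟩

lemma face_split {m : ℕ} {M : AddSubmonoid (Fin m → ℤ)} {F : Set (Fin m → ℝ)}
    (hF : IsFace M F) {a b : Fin m → ℤ} (ha : a ∈ M) (hb : b ∈ M)
    (hab : toR (a + b) ∈ F) : toR a ∈ F ∧ toR b ∈ F := by
  rcases hF with rfl | ⟨α, hα, rfl⟩
  · exact ⟨mem_coneM ha, mem_coneM hb⟩
  · have h1 : 0 ≤ α (toR a) := hα _ (mem_coneM ha)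
    have h2 : 0 ≤ α (toR b) := hα _ (mem_coneM hb)
    have h3 : α (toR a) + α (toR b) = 0 := by
      have := hab.2
      rw [toR_add, map_add] at this
      exact this
    exact ⟨⟨mem_coneM ha, by linarith⟩, ⟨mem_coneM hb, by linarith⟩⟩

/-- For a face `F` of `cone(M)`, the face projection
`π : K[M] → K[M ∩ F]` (sending `X^a ↦ X^a` for `a ∈ F` and `X^a ↦ 0`
otherwise) is a `K`-algebra homomorphism splitting the natural inclusion
`ι : K[M ∩ F] → K[M]`, with kernel `p_F`; hence `K[M]/p_F ≅ K[M ∩ F]`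
as `K`-algebras. -/
theorem quotient_by_face_ideal {m : ℕ} (K : Type*) [Field K]
    (M : AddSubmonoid (Fin m → ℤ)) (hFG : M.FG)
    (F : Set (Fin m → ℝ)) (hF : IsFace M F)
    (MF : AddSubmonoid (Fin m → ℤ))
    (hMF : ∀ x : Fin m → ℤ, x ∈ MF ↔ x ∈ M ∧ toR x ∈ F) :
    ∃ (π : AddMonoidAlgebra K ↥M →ₐ[K] AddMonoidAlgebra K ↥MF)
      (ι : AddMonoidAlgebra K ↥MF →ₐ[K] AddMonoidAlgebra K ↥M),
      (∀ (a : ↥M) (h : (a : Fin m → ℤ) ∈ MF),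
        π (AddMonoidAlgebra.single a (1 : K)) =
          AddMonoidAlgebra.single (⟨(a : Fin m → ℤ), h⟩ : ↥MF) (1 : K)) ∧
      (∀ a : ↥M, toR (a : Fin m → ℤ) ∉ F →
        π (AddMonoidAlgebra.single a (1 : K)) = 0) ∧
      (∀ b : ↥MF, ∃ hb : (b : Fin m → ℤ) ∈ M,
        ι (AddMonoidAlgebra.single b (1 : K)) =
          AddMonoidAlgebra.single (⟨(b : Fin m → ℤ), hb⟩ : ↥M) (1 : K)) ∧
      (∀ x, π (ι x) = x) ∧
      RingHom.ker (π : AddMonoidAlgebra K ↥M →+* AddMonoidAlgebra K ↥MF) = pIdeal K M F ∧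
      Nonempty ((AddMonoidAlgebra K ↥M ⧸ pIdeal K M F) ≃ₐ[K] AddMonoidAlgebra K ↥MF) := by
  classical
  have h0F : (0 : Fin m → ℤ) ∈ MF :=
    (hMF 0).2 ⟨M.zero_mem, by rw [toR_zero']; exact face_zero_mem hF⟩
  have hMFM : ∀ x : Fin m → ℤ, x ∈ MF → x ∈ M := fun x hx => ((hMF x).1 hx).1
  have hsplit : ∀ a b : ↥M, ((a : Fin m → ℤ) + b) ∈ MF →
      (a : Fin m → ℤ) ∈ MF ∧ (b : Fin m → ℤ) ∈ MF := by
    intro a b h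
    have := face_split hF a.2 b.2 ((hMF _).1 h).2
    exact ⟨(hMF _).2 ⟨a.2, this.1⟩, (hMF _).2 ⟨b.2, this.2⟩⟩
  set F0 : ↥M → AddMonoidAlgebra K ↥MF := fun a =>
    if h : (a : Fin m → ℤ) ∈ MF then AddMonoidAlgebra.single (⟨_, h⟩ : ↥MF) 1 else 0 with hF0
  have hF0add : ∀ x y : ↥M, F0 (x + y) = F0 x * F0 y := by
    intro x y
    by_cases h : ((x : Fin m → ℤ) + y) ∈ MF
    · have hx := (hsplit _ _ h).1
      have hy := (hsplit _ _ h).2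
      have h' : ((x + y : ↥M) : Fin m → ℤ) ∈ MF := h
      rw [hF0]
      simp only
      rw [dif_pos h', dif_pos hx, dif_pos hy, AddMonoidAlgebra.single_mul_single, one_mul]
      rfl
    · have h' : ¬ ((x + y : ↥M) : Fin m → ℤ) ∈ MF := h
      rw [hF0]; simp only
      rw [dif_neg h']
      by_cases hx : (x : Fin m → ℤ) ∈ MF
      · have hy : ¬ (y : Fin m → ℤ) ∈ MF := fun hy => h (MF.add_mem hx hy)
        rw [dif_neg hy, mul_zero]
      · rw [dif_neg hx, zero_mul]
  let f : Multiplicative ↥M →* AddMonoidAlgebra K ↥MF :=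
  { toFun := fun a => F0 (Multiplicative.toAdd a)
    map_one' := by
      show F0 0 = 1
      rw [hF0]; simp only [ZeroMemClass.coe_zero]; rw [dif_pos h0F]; rfl
    map_mul' := fun x y => hF0add _ _ }
  let g : Multiplicative ↥MF →* AddMonoidAlgebra K ↥M :=
  { toFun := fun b =>
      AddMonoidAlgebra.single (⟨_, hMFM _ (Multiplicative.toAdd b).2⟩ : ↥M) 1
    map_one' := rfl
    map_mul' := fun x y => by
      rw [AddMonoidAlgebra.single_mul_single, one_mul]
      rfl }
  let π : AddMonoidAlgebra K ↥M →ₐ[K] AddMonoidAlgebra K ↥MF :=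
    AddMonoidAlgebra.lift K _ ↥M f
  let ι : AddMonoidAlgebra K ↥MF →ₐ[K] AddMonoidAlgebra K ↥M :=
    AddMonoidAlgebra.lift K _ ↥MF g
  have hπ : ∀ a : ↥M, π (AddMonoidAlgebra.single a 1) = F0 a := by
    intro a
    show (AddMonoidAlgebra.lift K _ ↥M f) (AddMonoidAlgebra.single a 1) = _
    rw [AddMonoidAlgebra.lift_single, one_smul]
    rfl
  have hι : ∀ b : ↥MF, ι (AddMonoidAlgebra.single b 1)
      = AddMonoidAlgebra.single (⟨_, hMFM _ b.2⟩ : ↥M) 1 := by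
    intro b
    show (AddMonoidAlgebra.lift K _ ↥MF g) (AddMonoidAlgebra.single b 1) = _
    rw [AddMonoidAlgebra.lift_single, one_smul]
    rfl
  have hπι : ∀ x, π (ι x) = x := by
    have heq : π.comp ι = AlgHom.id K _ := by
      apply AddMonoidAlgebra.algHom_ext
      intro b
      simp only [AlgHom.comp_apply, AlgHom.id_apply]
      rw [hι, hπ, hF0]
      simp only
      rw [dif_pos b.2]
      exact Subsingleton.elim _ _
    intro x
    exact DFunLike.congr_fun heq x
  have hπ0 : ∀ a : ↥M, toR (a : Fin m → ℤ) ∉ F →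
      π (AddMonoidAlgebra.single a (1 : K)) = 0 := by
    intro a ha
    have h : ¬ (a : Fin m → ℤ) ∈ MF := fun h => ha ((hMF _).1 h).2
    rw [hπ, hF0]; simp only; rw [dif_neg h]
  have hπ1 : ∀ (a : ↥M) (h : (a : Fin m → ℤ) ∈ MF),
      π (AddMonoidAlgebra.single a (1 : K)) =
        AddMonoidAlgebra.single (⟨(a : Fin m → ℤ), h⟩ : ↥MF) (1 : K) := by
    intro a h
    rw [hπ, hF0]; simp only; rw [dif_pos h]
  have key : ∀ a : ↥M, (AddMonoidAlgebra.single a 1 : AddMonoidAlgebra K ↥M)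
      - ι (π (AddMonoidAlgebra.single a 1)) ∈ pIdeal K M F := by
    intro a
    by_cases h : (a : Fin m → ℤ) ∈ MF
    · rw [hπ1 a h, hι]
      have : (⟨((⟨(a : Fin m → ℤ), h⟩ : ↥MF) : Fin m → ℤ),
          hMFM _ (⟨(a : Fin m → ℤ), h⟩ : ↥MF).2⟩ : ↥M) = a := Subtype.ext rfl
      rw [this, sub_self]
      exact Ideal.zero_mem _
    · have ha : toR (a : Fin m → ℤ) ∉ F := fun hc => h ((hMF _).2 ⟨a.2, hc⟩)
      rw [hπ0 a ha, map_zero, sub_zero]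
      exact Ideal.subset_span ⟨a, ha, rfl⟩
  have hsub : ∀ x : AddMonoidAlgebra K ↥M, x - ι (π x) ∈ pIdeal K M F := by
    set cc : AddMonoidAlgebra K ↥M → AddMonoidAlgebra K ↥M := fun x => x with hcc
    intro x
    induction x using AddMonoidAlgebra.induction_linear with
    | zero => simp
    | add p q hp hq =>
      show cc (p + q) - ι (π (cc (p + q))) ∈ pIdeal K M F
      have e1 : cc (p + q) = cc p + cc q := rfl
      rw [e1, map_add π, map_add ι]
      have e2 : cc p + cc q - (ι (π (cc p)) + ι (π (cc q)))
          = (cc p - ι (π (cc p))) + (cc q - ι (π (cc q))) := by ring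
      rw [e2]
      exact Ideal.add_mem _ hp hq
    | single a c =>
      show (AddMonoidAlgebra.single a c : AddMonoidAlgebra K ↥M)
        - ι (π (AddMonoidAlgebra.single a c)) ∈ pIdeal K M F
      have hsc : (AddMonoidAlgebra.single a c : AddMonoidAlgebra K ↥M)
          = c • AddMonoidAlgebra.single a 1 := by
        rw [AddMonoidAlgebra.smul_single, smul_eq_mul, mul_one]
      rw [hsc, map_smul, map_smul, ← smul_sub]
      exact Submodule.smul_of_tower_mem _ c (key a)
  have hker : RingHom.ker (π : AddMonoidAlgebra K ↥M →+* AddMonoidAlgebra K ↥MF)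
      = pIdeal K M F := by
    apply le_antisymm
    · intro x hx
      have hx' : π x = 0 := hx
      have := hsub x
      rwa [hx', map_zero, sub_zero] at this
    · unfold pIdeal
      rw [Ideal.span_le]
      rintro _ ⟨a, ha, rfl⟩
      exact hπ0 a ha
  have hsurj : Function.Surjective π := fun y => ⟨ι y, hπι y⟩
  refine ⟨π, ι, hπ1, hπ0, fun b => ⟨hMFM _ b.2, hι b⟩, hπι, hker, ⟨?_⟩⟩
  exact (Ideal.quotientEquivAlgOfEq K (hker.symm : pIdeal K M F = _)).trans
    (Ideal.quotientKerAlgEquivOfSurjective hsurj)
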